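/- Let X be a real Banach space with dim X ≥ 2, p > 1, F(x) = (1/p)‖x‖^p, j_p : X → X* a selection of the duality mapping, and let φ : [0,∞) → [0,∞) be nondecreasing with φ(τ) > 0 for τ > 0. Suppose (d): there exist C, c > 0 such that for all x ≠ 0 and all y ∈ X with ‖x−y‖ ≤ c‖x‖ one has Δ_F^{j_p(x)}(y,x) ≥ C‖x‖^p φ(‖x−y‖/‖x‖). Then (e): there exists C' > 0 such that for all x ≠ 0 and all y ∈ X, Δ_F^{j_p(x)}(y,x) ≥ C'·max{‖x‖,‖y‖}^p · φ(‖x−y‖/max{‖x‖,‖y‖}); and consequently (f): there exists C'' > 0 such that for all x ≠ 0 and all y ∈ X, Δ^sym(x,y) ≥ C''·max{‖x‖,‖y‖}^p · φ(‖x−y‖/max{‖x‖,‖y‖}). -/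

import Mathlib

open scoped ENNReal

/-- The modulus of smoothness of a normed space `Y`:
`ρ_Y(τ) = sup {(‖x+τy‖+‖x−τy‖)/2 − 1 : x, y ∈ S_Y}`. -/
noncomputable def rhoSpace (Y : Type*) [NormedAddCommGroup Y] [NormedSpace ℝ Y] (τ : ℝ) : ℝ :=
  sSup {r : ℝ | ∃ x y : Y, ‖x‖ = 1 ∧ ‖y‖ = 1 ∧ r = (‖x + τ • y‖ + ‖x - τ • y‖) / 2 - 1}

/-- The modulus of convexity of a normed space `Y`:
`δ_Y(ε) = inf {1 − ‖y+ỹ‖/2 : y, ỹ ∈ S_Y, ‖y−ỹ‖ = ε}`. -/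
noncomputable def deltaSpace (Y : Type*) [NormedAddCommGroup Y] [NormedSpace ℝ Y] (ε : ℝ) : ℝ :=
  sInf {r : ℝ | ∃ y z : Y, ‖y‖ = 1 ∧ ‖z‖ = 1 ∧ ‖y - z‖ = ε ∧ r = 1 - ‖y + z‖ / 2}

/-- `φ` is a subgradient of `F` at `x`: `F(y) ≥ F(x) + ⟨φ, y−x⟩` for all `y`. -/
def IsSubgradient {X : Type*} [NormedAddCommGroup X] [NormedSpace ℝ X]
    (F : X → ℝ) (x : X) (φ : X →L[ℝ] ℝ) : Prop :=
  ∀ y : X, F x + φ (y - x) ≤ F y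

/-- The linearization error (Bregman divergence)
`Δ_F^{φ}(y,x) = F(y) − F(x) − ⟨φ, y−x⟩`. -/
def breg {X : Type*} [NormedAddCommGroup X] [NormedSpace ℝ X]
    (F : X → ℝ) (φ : X →L[ℝ] ℝ) (y x : X) : ℝ :=
  F y - F x - φ (y - x)

/-- The modulus of smoothness of `F` at `x` w.r.t. `φ`, with values in `[0,∞]`:
`ρ_{F,x}^{φ}(τ) = sup {|Δ_F^{φ}(y,x)| : ‖y−x‖ = τ}`. -/
noncomputable def rhoF {X : Type*} [NormedAddCommGroup X] [NormedSpace ℝ X]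
    (F : X → ℝ) (x : X) (φ : X →L[ℝ] ℝ) (τ : ℝ) : ℝ≥0∞ :=
  ⨆ y ∈ {y : X | ‖y - x‖ = τ}, ENNReal.ofReal |breg F φ y x|

/-- The modulus of convexity of `F` at `x` w.r.t. `φ`, with values in `[0,∞]`:
`δ_{F,x}^{φ}(τ) = inf {|Δ_F^{φ}(y,x)| : ‖y−x‖ = τ}`. -/
noncomputable def deltaF {X : Type*} [NormedAddCommGroup X] [NormedSpace ℝ X]
    (F : X → ℝ) (x : X) (φ : X →L[ℝ] ℝ) (τ : ℝ) : ℝ≥0∞ :=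
  ⨅ y ∈ {y : X | ‖y - x‖ = τ}, ENNReal.ofReal |breg F φ y x|

/-- `jp` is a selection of the duality mapping with exponent `p`:
`⟨j_p(x), x⟩ = ‖j_p(x)‖·‖x‖` and `‖j_p(x)‖ = ‖x‖^{p−1}` for every `x`. -/
def IsDualitySelection {X : Type*} [NormedAddCommGroup X] [NormedSpace ℝ X]
    (p : ℝ) (jp : X → X →L[ℝ] ℝ) : Prop :=
  ∀ x : X, jp x x = ‖jp x‖ * ‖x‖ ∧ ‖jp x‖ = ‖x‖ ^ (p - 1)

lemma young_aux {p : ℝ} (hp : 1 < p) {a b : ℝ} (ha : 0 ≤ a) (hb : 0 ≤ b) :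
    a ^ (p - 1) * b ≤ (1 - 1 / p) * a ^ p + (1 / p) * b ^ p := by
  have hp1 : p - 1 ≠ 0 := by nlinarith
  have hq : (p / (p - 1)).HolderConjugate p :=
    ((Real.holderConjugate_iff_eq_conjExponent hp).2 rfl).symm
  have h := Real.young_inequality_of_nonneg (Real.rpow_nonneg ha (p - 1)) hb hq
  have h2 : (a ^ (p - 1)) ^ (p / (p - 1)) = a ^ p := by
    rw [← Real.rpow_mul ha]
    congr 1
    field_simp
  rw [h2] at h
  have hpq : a ^ p / (p / (p - 1)) = (1 - 1 / p) * a ^ p := by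
    have hp0 : p ≠ 0 := by nlinarith
    field_simp
  rw [hpq] at h
  have : b ^ p / p = (1 / p) * b ^ p := by ring
  linarith [h]

lemma jp_self {X : Type*} [NormedAddCommGroup X] [NormedSpace ℝ X]
    {p : ℝ} (hp : 1 < p) {jp : X → X →L[ℝ] ℝ} (hjp : IsDualitySelection p jp) (z : X) :
    (jp z) z = ‖z‖ ^ p := by
  obtain ⟨h1, h2⟩ := hjp z
  rw [h1, h2]
  rcases eq_or_ne z 0 with rfl | hz
  · simp [Real.zero_rpow (by positivity : p ≠ 0),
      Real.zero_rpow (by intro h; nlinarith [h] : p - 1 ≠ 0)]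
  · rw [← Real.rpow_add_one (norm_ne_zero_iff.2 hz)]
    ring_nf

lemma jp_bound {X : Type*} [NormedAddCommGroup X] [NormedSpace ℝ X]
    {p : ℝ} {jp : X → X →L[ℝ] ℝ} (hjp : IsDualitySelection p jp) (z w : X) :
    (jp z) w ≤ ‖z‖ ^ (p - 1) * ‖w‖ := by
  obtain ⟨_, h2⟩ := hjp z
  calc (jp z) w ≤ |(jp z) w| := le_abs_self _
  _ ≤ ‖jp z‖ * ‖w‖ := by
      have := (jp z).le_opNorm w
      rwa [Real.norm_eq_abs] at this
  _ = ‖z‖ ^ (p - 1) * ‖w‖ := by rw [h2]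

lemma breg_nonneg {X : Type*} [NormedAddCommGroup X] [NormedSpace ℝ X]
    {p : ℝ} (hp : 1 < p) {jp : X → X →L[ℝ] ℝ} (hjp : IsDualitySelection p jp) (w z : X) :
    0 ≤ breg (fun v : X => (1 / p) * ‖v‖ ^ p) (jp z) w z := by
  have hzz := jp_self hp hjp z
  have hw := jp_bound hjp z w
  have hy := young_aux hp (norm_nonneg z) (norm_nonneg w)
  simp only [breg, map_sub, hzz]
  nlinarith [mul_le_mul_of_nonneg_left hw (le_of_lt (by positivity : (0:ℝ) < 1))]

lemma norm_rpow_combo {X : Type*} [NormedAddCommGroup X] [NormedSpace ℝ X]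
    {p : ℝ} (hp : 1 ≤ p) {l : ℝ} (h0 : 0 ≤ l) (h1 : l ≤ 1) (x y : X) :
    ‖x + l • (y - x)‖ ^ p ≤ (1 - l) * ‖x‖ ^ p + l * ‖y‖ ^ p := by
  have hnorm : ‖x + l • (y - x)‖ ≤ (1 - l) * ‖x‖ + l * ‖y‖ := by
    have hxy : x + l • (y - x) = (1 - l) • x + l • y := by module
    rw [hxy]
    calc ‖(1 - l) • x + l • y‖ ≤ ‖(1 - l) • x‖ + ‖l • y‖ := norm_add_le _ _
    _ = (1 - l) * ‖x‖ + l * ‖y‖ := by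
        rw [norm_smul, norm_smul, Real.norm_eq_abs, Real.norm_eq_abs,
          abs_of_nonneg (by linarith), abs_of_nonneg h0]
  calc ‖x + l • (y - x)‖ ^ p ≤ ((1 - l) * ‖x‖ + l * ‖y‖) ^ p :=
        Real.rpow_le_rpow (norm_nonneg _) hnorm (by linarith)
  _ ≤ (1 - l) * ‖x‖ ^ p + l * ‖y‖ ^ p := by
      have := (convexOn_rpow hp).2 (Set.mem_Ici.2 (norm_nonneg x))
        (Set.mem_Ici.2 (norm_nonneg y))
        (show (0:ℝ) ≤ 1 - l from by linarith) h0 (show (1 - l) + l = 1 from by ring)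
      simpa [smul_eq_mul] using this

lemma breg_combo {X : Type*} [NormedAddCommGroup X] [NormedSpace ℝ X]
    {p : ℝ} (hp : 1 < p) (g : X →L[ℝ] ℝ) {l : ℝ} (h0 : 0 ≤ l) (h1 : l ≤ 1) (x y : X) :
    breg (fun v : X => (1 / p) * ‖v‖ ^ p) g (x + l • (y - x)) x
      ≤ l * breg (fun v : X => (1 / p) * ‖v‖ ^ p) g y x := by
  simp only [breg]
  have h := norm_rpow_combo (le_of_lt hp) h0 h1 x y
  have h' : (1/p) * ‖x + l • (y - x)‖ ^ p ≤ (1/p) * ((1 - l) * ‖x‖ ^ p + l * ‖y‖ ^ p) :=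
    mul_le_mul_of_nonneg_left h (by positivity)
  have hg : g (x + l • (y - x) - x) = l * g (y - x) := by
    rw [add_sub_cancel_left, map_smul, smul_eq_mul]
  rw [hg]
  linarith [h']

set_option maxHeartbeats 1000000 in
/-- for `F = (1/p)‖·‖^p` and a nondecreasing `φ : [0,∞) → [0,∞)` positive on
`(0,∞)`, condition (d) implies (e) (uniform lower bound on the Bregman divergence) and (f)
(lower bound on the symmetric Bregman divergence). -/
theorem stmt15 (X : Type*) [NormedAddCommGroup X] [NormedSpace ℝ X] [CompleteSpace X]
    (hdim : 2 ≤ Module.rank ℝ X)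
    (p : ℝ) (hp : 1 < p)
    (jp : X → X →L[ℝ] ℝ) (hjp : IsDualitySelection p jp)
    (φ : ℝ → ℝ)
    (hφ0 : ∀ τ : ℝ, 0 ≤ τ → 0 ≤ φ τ)
    (hφmono : ∀ τ₁ τ₂ : ℝ, 0 ≤ τ₁ → τ₁ ≤ τ₂ → φ τ₁ ≤ φ τ₂)
    (hφpos : ∀ τ : ℝ, 0 < τ → 0 < φ τ)
    (hd : ∃ C c : ℝ, 0 < C ∧ 0 < c ∧
      ∀ x y : X, x ≠ 0 → ‖x - y‖ ≤ c * ‖x‖ →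
        C * ‖x‖ ^ p * φ (‖x - y‖ / ‖x‖) ≤
          breg (fun z : X => (1 / p) * ‖z‖ ^ p) (jp x) y x) :
    (∃ C' : ℝ, 0 < C' ∧ ∀ x y : X, x ≠ 0 →
      C' * max ‖x‖ ‖y‖ ^ p * φ (‖x - y‖ / max ‖x‖ ‖y‖) ≤
        breg (fun z : X => (1 / p) * ‖z‖ ^ p) (jp x) y x) ∧
    (∃ C'' : ℝ, 0 < C'' ∧ ∀ x y : X, x ≠ 0 →
      C'' * max ‖x‖ ‖y‖ ^ p * φ (‖x - y‖ / max ‖x‖ ‖y‖) ≤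
        breg (fun z : X => (1 / p) * ‖z‖ ^ p) (jp x) y x +
          breg (fun z : X => (1 / p) * ‖z‖ ^ p) (jp y) x y) := by
  classical
  obtain ⟨C, c, hC, hc, hd⟩ := hd
  set F : X → ℝ := fun z : X => (1 / p) * ‖z‖ ^ p with hF
  clear_value F
  have hp0 : (0:ℝ) < p := by linarith
  have hp1 : (0:ℝ) < p - 1 := by linarith
  set M : ℝ := (8 * p) ^ (p - 1)⁻¹ with hM
  have h8p : (1:ℝ) < 8 * p := by linarith
  have hM1 : 1 < M := by
    rw [hM]
    exact (Real.one_lt_rpow_iff_of_pos (by linarith)).2 (Or.inl ⟨h8p, by positivity⟩)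
  have hM0 : (0:ℝ) < M := by linarith
  have hMp1 : M ^ (p - 1) = 8 * p := by
    rw [hM, ← Real.rpow_mul (by linarith : (0:ℝ) ≤ 8 * p),
      inv_mul_cancel₀ (ne_of_gt hp1), Real.rpow_one]
  have hMp : M ^ p = (8 * p) * M := by
    have h1 : M ^ p = M ^ (p - 1) * M := by
      rw [← Real.rpow_add_one (ne_of_gt hM0)]
      ring_nf
    rw [h1, hMp1]
  have hMp8 : 8 * p ≤ M ^ p := by rw [hMp]; nlinarith
  clear_value M
  clear hM
  have hφ2 : 0 < φ 2 := hφpos 2 (by norm_num)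
  have hφc : 0 < φ c := hφpos c hc
  have h1cp : 0 < (1 + c) ^ p := Real.rpow_pos_of_pos (by linarith) p
  have hMpp : (0:ℝ) < M ^ p := by linarith
  set KA : ℝ := C / (1 + c) ^ p with hKA
  set KB : ℝ := C * φ c / (M ^ p * φ 2) with hKB
  set KC : ℝ := 1 / (2 * p * φ 2) with hKC
  have hKA0 : 0 < KA := by rw [hKA]; positivity
  have hKB0 : 0 < KB := by rw [hKB]; positivity
  have hKC0 : 0 < KC := by rw [hKC]; positivity
  set C' : ℝ := min KA (min KB KC) with hC'def
  have hC'0 : 0 < C' := lt_min hKA0 (lt_min hKB0 hKC0)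
  have hC'A : C' ≤ KA := min_le_left _ _
  have hC'B : C' ≤ KB := le_trans (min_le_right _ _) (min_le_left _ _)
  have hC'C : C' ≤ KC := le_trans (min_le_right _ _) (min_le_right _ _)
  have hKAC : KA * (1 + c) ^ p = C := by rw [hKA]; field_simp
  have hKBC : KB * (M ^ p * φ 2) = C * φ c := by rw [hKB]; field_simp
  have hKCC : KC * (2 * p * φ 2) = 1 := by rw [hKC]; field_simp
  clear_value KA KB KC C'
  clear hKA hKB hKC hC'def
  have he : ∀ x y : X, x ≠ 0 →
      C' * max ‖x‖ ‖y‖ ^ p * φ (‖x - y‖ / max ‖x‖ ‖y‖) ≤ breg F (jp x) y x := by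
    intro x y hx
    have ha : 0 < ‖x‖ := norm_pos_iff.2 hx
    have hm : 0 < max ‖x‖ ‖y‖ := lt_of_lt_of_le ha (le_max_left _ _)
    have hd0 : (0:ℝ) ≤ ‖x - y‖ := norm_nonneg _
    have hym : ‖y‖ ≤ ‖x‖ + ‖x - y‖ := by
      have h1 := norm_sub_norm_le y x
      rw [norm_sub_rev] at h1
      linarith
    have hdm : ‖x - y‖ / max ‖x‖ ‖y‖ ≤ 2 := by
      rw [div_le_iff₀ hm]
      have h1 : ‖x - y‖ ≤ ‖x‖ + ‖y‖ := norm_sub_le x y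
      have h2 := le_max_left ‖x‖ ‖y‖
      have h3 := le_max_right ‖x‖ ‖y‖
      linarith
    have hφ2le : φ (‖x - y‖ / max ‖x‖ ‖y‖) ≤ φ 2 := hφmono _ _ (by positivity) hdm
    have hφnn : 0 ≤ φ (‖x - y‖ / max ‖x‖ ‖y‖) := hφ0 _ (by positivity)
    by_cases hyb : ‖y‖ ≤ M * ‖x‖
    · by_cases hdc : ‖x - y‖ ≤ c * ‖x‖
      · -- Case A : close to x, apply (d) directly
        have hda := hd x y hx hdc
        have hmle : max ‖x‖ ‖y‖ ≤ (1 + c) * ‖x‖ :=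
          max_le (le_mul_of_one_le_left ha.le (by linarith)) (by nlinarith [hym, hdc])
        have hmp : max ‖x‖ ‖y‖ ^ p ≤ (1 + c) ^ p * ‖x‖ ^ p := by
          rw [← Real.mul_rpow (by linarith) ha.le]
          exact Real.rpow_le_rpow hm.le hmle hp0.le
        have hφle : φ (‖x - y‖ / max ‖x‖ ‖y‖) ≤ φ (‖x - y‖ / ‖x‖) := by
          apply hφmono _ _ (by positivity)
          gcongr
          exact le_max_left _ _
        calc C' * max ‖x‖ ‖y‖ ^ p * φ (‖x - y‖ / max ‖x‖ ‖y‖)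
            ≤ KA * ((1 + c) ^ p * ‖x‖ ^ p) * φ (‖x - y‖ / ‖x‖) := by
              apply mul_le_mul ?_ hφle hφnn (by positivity)
              exact mul_le_mul hC'A hmp (by positivity) hKA0.le
        _ = C * ‖x‖ ^ p * φ (‖x - y‖ / ‖x‖) := by
              linear_combination (‖x‖ ^ p * φ (‖x - y‖ / ‖x‖)) * hKAC
        _ ≤ breg F (jp x) y x := hda
      · -- Case B : moderate distance, convexity argument
        push_neg at hdc
        have hdpos : 0 < ‖x - y‖ := lt_trans (mul_pos hc ha) hdc
        set l : ℝ := c * ‖x‖ / ‖x - y‖ with hl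
        have hl0 : 0 < l := by rw [hl]; positivity
        have hl1 : l ≤ 1 := by rw [hl, div_le_one hdpos]; linarith
        have hld : l * ‖x - y‖ = c * ‖x‖ := by rw [hl, div_mul_cancel₀ _ hdpos.ne']
        clear_value l
        set z : X := x + l • (y - x) with hz
        have hxz : ‖x - z‖ = c * ‖x‖ := by
          have h1 : x - z = (-l) • (y - x) := by rw [hz]; module
          rw [h1, norm_smul, Real.norm_eq_abs, abs_neg, abs_of_nonneg hl0.le,
            norm_sub_rev, hld]
        have hdz := hd x z hx (le_of_eq hxz)
        rw [hxz, mul_div_assoc, div_self ha.ne', mul_one] at hdz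
        have hcomb : breg F (jp x) z x ≤ l * breg F (jp x) y x := by
          have h := breg_combo hp (jp x) hl0.le hl1 x y
          rw [← hz, ← hF] at h
          exact h
        have hbnn := breg_nonneg hp hjp y x
        rw [← hF] at hbnn
        have hbig : C * ‖x‖ ^ p * φ c ≤ breg F (jp x) y x := by
          have hlB : l * breg F (jp x) y x ≤ 1 * breg F (jp x) y x :=
            mul_le_mul_of_nonneg_right hl1 hbnn
          rw [one_mul] at hlB
          linarith [hdz, hcomb, hlB]
        have hmM : max ‖x‖ ‖y‖ ≤ M * ‖x‖ :=
          max_le (le_mul_of_one_le_left ha.le hM1.le) hyb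
        have hmp : max ‖x‖ ‖y‖ ^ p ≤ M ^ p * ‖x‖ ^ p := by
          rw [← Real.mul_rpow hM0.le ha.le]
          exact Real.rpow_le_rpow hm.le hmM hp0.le
        calc C' * max ‖x‖ ‖y‖ ^ p * φ (‖x - y‖ / max ‖x‖ ‖y‖)
            ≤ KB * (M ^ p * ‖x‖ ^ p) * φ 2 := by
              apply mul_le_mul ?_ hφ2le hφnn (by positivity)
              exact mul_le_mul hC'B hmp (by positivity) hKB0.le
        _ = C * ‖x‖ ^ p * φ c := by
              linear_combination ‖x‖ ^ p * hKBC
        _ ≤ breg F (jp x) y x := hbig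
    · -- Case C : y much larger than x
      push_neg at hyb
      have hb : 0 < ‖y‖ := lt_trans (mul_pos (by linarith) ha) hyb
      have hxy' : ‖x‖ ≤ ‖y‖ := le_trans (le_mul_of_one_le_left ha.le hM1.le) hyb.le
      have hab : ‖x‖ ≤ ‖y‖ / M := by
        rw [le_div_iff₀ hM0]
        nlinarith [hyb]
      have hmb : max ‖x‖ ‖y‖ = ‖y‖ := max_eq_right hxy'
      have hJ : (jp x) (y - x) ≤ ‖x‖ ^ (p-1) * (‖x‖ + ‖y‖) := by
        calc (jp x) (y - x) ≤ ‖x‖ ^ (p-1) * ‖y - x‖ := jp_bound hjp x (y - x)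
        _ ≤ ‖x‖ ^ (p-1) * (‖x‖ + ‖y‖) := by
            apply mul_le_mul_of_nonneg_left ?_ (by positivity)
            calc ‖y - x‖ ≤ ‖y‖ + ‖x‖ := norm_sub_le _ _
            _ = ‖x‖ + ‖y‖ := by ring
      have hap : ‖x‖ ^ p ≤ ‖y‖ ^ p / (8*p) := by
        calc ‖x‖ ^ p ≤ (‖y‖ / M) ^ p := Real.rpow_le_rpow (norm_nonneg x) hab hp0.le
        _ = ‖y‖ ^ p / M ^ p := Real.div_rpow hb.le hM0.le p
        _ ≤ ‖y‖ ^ p / (8*p) := by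
            apply div_le_div_of_nonneg_left (by positivity) (by linarith) hMp8
      have hap1 : ‖x‖ ^ (p-1) ≤ ‖y‖ ^ (p-1) / (8*p) := by
        calc ‖x‖ ^ (p-1) ≤ (‖y‖ / M) ^ (p-1) :=
              Real.rpow_le_rpow (norm_nonneg x) hab hp1.le
        _ = ‖y‖ ^ (p-1) / M ^ (p-1) := Real.div_rpow hb.le hM0.le (p-1)
        _ = ‖y‖ ^ (p-1) / (8*p) := by rw [hMp1]
      have hbp1 : ‖y‖ ^ (p-1) * ‖y‖ = ‖y‖ ^ p := by
        rw [← Real.rpow_add_one hb.ne' (p-1)]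
        ring_nf
      have hbreg : ‖y‖ ^ p / (2*p) ≤ breg F (jp x) y x := by
        have e1 : ‖x‖ ^ (p-1) * (‖x‖ + ‖y‖) ≤ ‖y‖ ^ p / (4*p) := by
          have h2b : ‖x‖ + ‖y‖ ≤ 2 * ‖y‖ := by linarith [hxy']
          calc ‖x‖ ^ (p-1) * (‖x‖ + ‖y‖) ≤ (‖y‖ ^ (p-1) / (8*p)) * (2 * ‖y‖) :=
                mul_le_mul hap1 h2b (by positivity) (by positivity)
          _ = (‖y‖ ^ (p-1) * ‖y‖) * (2 / (8*p)) := by ring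
          _ = ‖y‖ ^ p / (4*p) := by rw [hbp1]; ring
        have e2 : (1/p) * ‖x‖ ^ p ≤ ‖y‖ ^ p / (8*p) := by
          have h1p : (1:ℝ)/p ≤ 1 := by rw [div_le_one hp0]; linarith
          calc (1/p) * ‖x‖ ^ p ≤ 1 * ‖x‖ ^ p :=
                mul_le_mul_of_nonneg_right h1p (by positivity)
          _ = ‖x‖ ^ p := one_mul _
          _ ≤ ‖y‖ ^ p / (8*p) := hap
        have key : ‖y‖ ^ p / (2*p) ≤ (1/p) * ‖y‖ ^ p - ‖y‖ ^ p / (8*p) - ‖y‖ ^ p / (4*p) := by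
          have hbp0 : (0:ℝ) ≤ ‖y‖ ^ p := by positivity
          rw [div_le_iff₀ (by linarith : (0:ℝ) < 2*p)]
          have expand : ((1/p) * ‖y‖ ^ p - ‖y‖ ^ p / (8*p) - ‖y‖ ^ p / (4*p)) * (2*p)
              = (5/4) * ‖y‖ ^ p := by field_simp; ring
          rw [expand]
          linarith
        have hbr : breg F (jp x) y x
            = (1/p) * ‖y‖ ^ p - (1/p) * ‖x‖ ^ p - (jp x) (y - x) := by
          rw [show breg F (jp x) y x = F y - F x - (jp x) (y - x) from rfl, hF]
        rw [hbr]
        linarith [e1, e2, hJ, key]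
      rw [hmb] at hφ2le hφnn ⊢
      calc C' * ‖y‖ ^ p * φ (‖x - y‖ / ‖y‖) ≤ KC * ‖y‖ ^ p * φ 2 := by
            apply mul_le_mul ?_ hφ2le hφnn (by positivity)
            exact mul_le_mul_of_nonneg_right hC'C (by positivity)
      _ = ‖y‖ ^ p / (2*p) := by
            have h1 : KC * ‖y‖ ^ p * φ 2 * (2 * p) = KC * (2 * p * φ 2) * ‖y‖ ^ p := by ring
            rw [eq_div_iff (ne_of_gt (by positivity : (0:ℝ) < 2*p)), h1, hKCC, one_mul]
      _ ≤ breg F (jp x) y x := hbreg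
  refine ⟨⟨C', hC'0, he⟩, ⟨C', hC'0, fun x y hx => ?_⟩⟩
  have h1 := he x y hx
  have h2 := breg_nonneg hp hjp x y
  rw [← hF] at h2
  linarith
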